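/- Let n₁,n₂,n₃,n₄ ∈ ℝ³ and A₁,A₂,A₃,A₄ ∈ ℝ, and for i = 1,2,3,4 let O_i : (0,∞) → M₃(ℝ) be families of matrices such that R²·(O_i(R) − I) → A_i · J(n_i) as R → ∞. If O₄(R) O₃(R) O₂(R) O₁(R) = I for all R > 0, then A₁ n₁ + A₂ n₂ + A₃ n₃ + A₄ n₄ = 0. -/
import Mathlib


open Matrix Filter

noncomputable section

/-- The map `J : ℝ³ → M₃(ℝ)` implementing the Lorentzian cross product, `J(u)w = u × w`. -/
def Jmat (u : Fin 3 → ℝ) : Matrix (Fin 3) (Fin 3) ℝ :=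
  !![0, u 2, -u 1; u 2, 0, -u 0; -u 1, u 0, 0]

/-- Flat (curvature-zero) limit of the holonomy closure: if the four families of matrices
satisfy `R²(O_i(R) - I) → A_i J(n_i)` as `R → ∞` and close, `O₄O₃O₂O₁ = I`, for all `R > 0`,
then the flat Minkowski closure `∑ A_i n_i = 0` holds. -/
theorem flat_limit_minkowski_closure (n : Fin 4 → (Fin 3 → ℝ)) (A : Fin 4 → ℝ)
    (O : Fin 4 → ℝ → Matrix (Fin 3) (Fin 3) ℝ)
    (hlim : ∀ i, Tendsto (fun R : ℝ => (R ^ 2) • (O i R - 1)) atTop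
      (nhds (A i • Jmat (n i))))
    (hclos : ∀ R : ℝ, 0 < R → O 3 R * O 2 R * O 1 R * O 0 R = 1) :
    ∑ i, A i • n i = 0 := by
  set E : Fin 4 → ℝ → Matrix (Fin 3) (Fin 3) ℝ := fun i R => (R ^ 2) • (O i R - 1) with hEdef
  have hEi : ∀ i, Tendsto (E i) atTop (nhds (A i • Jmat (n i))) := hlim
  have hinv : Tendsto (fun R : ℝ => (R ^ 2)⁻¹) atTop (nhds 0) :=
    tendsto_inv_atTop_zero.comp (tendsto_pow_atTop (by norm_num))
  have hO : ∀ i, Tendsto (O i) atTop (nhds 1) := by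
    intro i
    have h1 : Tendsto (fun R : ℝ => (1 : Matrix (Fin 3) (Fin 3) ℝ) + (R ^ 2)⁻¹ • E i R)
        atTop (nhds (1 + (0 : ℝ) • (A i • Jmat (n i)))) :=
      tendsto_const_nhds.add (hinv.smul (hEi i))
    rw [zero_smul, add_zero] at h1
    refine h1.congr' ?_
    filter_upwards [eventually_gt_atTop (0 : ℝ)] with R hR
    have hR2 : (R ^ 2 : ℝ) ≠ 0 := by positivity
    simp only [hEdef, smul_smul, inv_mul_cancel₀ hR2, one_smul]
    abel
  have hg : Tendsto (fun R : ℝ =>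
      E 3 R * (O 2 R * (O 1 R * O 0 R)) + (E 2 R * (O 1 R * O 0 R) + (E 1 R * O 0 R + E 0 R)))
      atTop (nhds (A 3 • Jmat (n 3) * (1 * (1 * 1)) +
        (A 2 • Jmat (n 2) * (1 * 1) + (A 1 • Jmat (n 1) * 1 + A 0 • Jmat (n 0))))) := by
    exact ((hEi 3).mul ((hO 2).mul ((hO 1).mul (hO 0)))).add
      (((hEi 2).mul ((hO 1).mul (hO 0))).add (((hEi 1).mul (hO 0)).add (hEi 0)))
  have hgeq : ∀ R : ℝ,
      E 3 R * (O 2 R * (O 1 R * O 0 R)) + (E 2 R * (O 1 R * O 0 R) + (E 1 R * O 0 R + E 0 R))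
      = (R ^ 2) • (O 3 R * O 2 R * O 1 R * O 0 R - 1) := by
    intro R
    simp only [hEdef, smul_mul_assoc, ← smul_add]
    congr 1
    noncomm_ring
  have hg0 : Tendsto (fun R : ℝ =>
      E 3 R * (O 2 R * (O 1 R * O 0 R)) + (E 2 R * (O 1 R * O 0 R) + (E 1 R * O 0 R + E 0 R)))
      atTop (nhds 0) := by
    refine Tendsto.congr' ?_ tendsto_const_nhds
    filter_upwards [eventually_gt_atTop (0 : ℝ)] with R hR
    rw [hgeq R, hclos R hR, sub_self, smul_zero]
  have hM : A 3 • Jmat (n 3) * (1 * (1 * 1)) +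
      (A 2 • Jmat (n 2) * (1 * 1) + (A 1 • Jmat (n 1) * 1 + A 0 • Jmat (n 0))) = 0 :=
    tendsto_nhds_unique hg hg0
  simp only [mul_one, one_mul] at hM
  have h01 := congrFun (congrFun hM 0) 1
  have h02 := congrFun (congrFun hM 0) 2
  have h21 := congrFun (congrFun hM 2) 1
  simp [Jmat, Matrix.add_apply, Matrix.smul_apply] at h01 h02 h21
  funext x
  simp only [Fin.sum_univ_four, Pi.add_apply, Pi.smul_apply, smul_eq_mul, Pi.zero_apply]
  fin_cases x <;> simp <;> linarith
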